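/- arXiv:1611.09331 — 2 statements merged into one kernel-verified Lean document; each statement's English description precedes it below -/
import Mathlib

section
/- A closed line segment [A,B] of positive length in ℝ² is not a disk, and moreover there exist a line segment K₁ isometric to [A,B] and a triangle with vertices A₀, A₁, A₂ containing both [A,B] and K₁ such that for every j ∈ {0,1,2} and k ∈ {0,1}, the segment K_{1−k} is not contained in the convex hull of K_k ∪ ({A₀,A₁,A₂} \ {A_j}), where K₀ = [A,B]. -/
open RealInnerProductSpace

noncomputable section

/-- The Euclidean plane. -/
abbrev Pt : Type := EuclideanSpace ℝ (Fin 2)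

/-- Counterclockwise rotation by π/2. -/
def rot (v : Pt) : Pt := WithLp.toLp 2 ![-(v 1), v 0]

/-- The (directed) line through `p` with direction `v`. -/
def dline (p v : Pt) : Set Pt := {x : Pt | ∃ t : ℝ, x = p + t • v}

lemma rot_add (x y : Pt) : rot (x + y) = rot x + rot y := by
  ext i; fin_cases i <;> (simp [rot]; try ring)

lemma rot_sub (x y : Pt) : rot (x - y) = rot x - rot y := by
  ext i; fin_cases i <;> (simp [rot]; try ring)

lemma rot_smul (r : ℝ) (x : Pt) : rot (r • x) = r • rot x := by
  ext i; fin_cases i <;> (simp [rot]; try ring)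

lemma rot_rot (x : Pt) : rot (rot x) = -x := by
  ext i; fin_cases i <;> (simp [rot]; try ring)

lemma inner_rot_rot (x y : Pt) : ⟪rot x, rot y⟫ = ⟪x, y⟫ := by
  simp [PiLp.inner_apply, RCLike.inner_apply, Fin.sum_univ_two, rot]; ring

lemma inner_rot_right (x : Pt) : ⟪x, rot x⟫ = 0 := by
  simp [PiLp.inner_apply, RCLike.inner_apply, Fin.sum_univ_two, rot]; ring

lemma inner_rot_left (x : Pt) : ⟪rot x, x⟫ = 0 := by
  simp [PiLp.inner_apply, RCLike.inner_apply, Fin.sum_univ_two, rot]; ring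

lemma myIso_norm (z : Pt) : ‖(3/5 : ℝ) • z - (4/5 : ℝ) • rot z‖ = ‖z‖ := by
  rw [norm_eq_sqrt_real_inner ((3/5 : ℝ) • z - (4/5 : ℝ) • rot z), norm_eq_sqrt_real_inner z]
  congr 1
  simp only [inner_sub_left, inner_sub_right, real_inner_smul_left, real_inner_smul_right,
    inner_rot_rot, inner_rot_left, inner_rot_right]
  ring

/-- Rotation by the angle with cos = 3/5, sin = -4/5, followed by translation. -/
def myIso (w : Pt) : Pt ≃ᵢ Pt where
  toFun x := w + ((3/5 : ℝ) • x - (4/5 : ℝ) • rot x)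
  invFun y := (3/5 : ℝ) • (y - w) + (4/5 : ℝ) • rot (y - w)
  left_inv x := by
    simp only [add_sub_cancel_left, rot_sub, rot_smul, rot_rot]
    module
  right_inv y := by
    simp only [rot_add, rot_sub, rot_smul, rot_rot]
    module
  isometry_toFun := by
    apply Isometry.of_dist_eq
    intro x y
    rw [dist_eq_norm, dist_eq_norm]
    have hd : w + ((3/5 : ℝ) • x - (4/5 : ℝ) • rot x) - (w + ((3/5 : ℝ) • y - (4/5 : ℝ) • rot y))
        = (3/5 : ℝ) • (x - y) - (4/5 : ℝ) • rot (x - y) := by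
      simp only [rot_sub]; module
    rw [hd, myIso_norm]

lemma myIso_apply (w x : Pt) : myIso w x = w + ((3/5 : ℝ) • x - (4/5 : ℝ) • rot x) := rfl

lemma myIso_image_segment (w A B : Pt) :
    myIso w '' segment ℝ A B = segment ℝ (myIso w A) (myIso w B) := by
  rw [segment_eq_image', segment_eq_image', ← Set.image_comp]
  apply Set.image_congr'
  intro θ
  simp only [Function.comp_apply, myIso_apply, rot_add, rot_smul, rot_sub]
  module

lemma combo_mem (V0 V1 V2 : Pt) (a b c : ℝ) (ha : 0 ≤ a) (hb : 0 ≤ b) (hc : 0 ≤ c)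
    (hs : a + b + c = 1) :
    a • V0 + b • V1 + c • V2 ∈ convexHull ℝ ({V0, V1, V2} : Set Pt) := by
  have h := Finset.centerMass_mem_convexHull (s := ({V0, V1, V2} : Set Pt))
    (Finset.univ : Finset (Fin 3)) (w := ![a, b, c]) (z := ![V0, V1, V2]) ?_ ?_ ?_
  · rwa [Finset.centerMass_eq_of_sum_1, Fin.sum_univ_three] at h
    · rw [Fin.sum_univ_three]; simpa using hs
  · intro i _; fin_cases i <;> simpa
  · rw [Fin.sum_univ_three]; simp only [Matrix.cons_val_zero, Matrix.cons_val_one,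
      Matrix.head_cons, Matrix.cons_val_two, Matrix.tail_cons]; linarith
  · intro i _; fin_cases i <;> simp

lemma not_mem_hull_of_sep (v e : Pt) (S : Set Pt)
    (h : ∀ x ∈ S, ⟪x, v⟫ < ⟪e, v⟫) : e ∉ convexHull ℝ S := by
  intro he
  have hlin : IsLinearMap ℝ (fun x : Pt => ⟪x, v⟫) :=
    ⟨fun x y => inner_add_left x y v, fun c x => real_inner_smul_left x v c⟩
  have hc : Convex ℝ {x : Pt | ⟪x, v⟫ < ⟪e, v⟫} := convex_halfSpace_lt hlin _
  have h2 : ⟪e, v⟫ < ⟪e, v⟫ := convexHull_min h hc he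
  exact lt_irrefl _ h2

/-- Point with coordinates `(s, t)` in the frame `(A; B - A, rot (B - A))`. -/
def fpt (A B : Pt) (s t : ℝ) : Pt := A + s • (B - A) + t • rot (B - A)

lemma norm_rot (x : Pt) : ‖rot x‖ = ‖x‖ := by
  rw [norm_eq_sqrt_real_inner (rot x), norm_eq_sqrt_real_inner x, inner_rot_rot]

lemma fpt_val (A B : Pt) (a b s t : ℝ) :
    ⟪fpt A B s t, a • (B - A) + b • rot (B - A)⟫
      = ⟪A, a • (B - A) + b • rot (B - A)⟫ + (a * s + b * t) * ⟪B - A, B - A⟫ := by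
  simp only [fpt, inner_add_left, inner_add_right, real_inner_smul_left, real_inner_smul_right,
    inner_rot_rot, inner_rot_left, inner_rot_right]
  ring

lemma inner_self_pos' (x : Pt) (hx : x ≠ 0) : 0 < ⟪x, x⟫ := by
  rw [real_inner_self_eq_norm_sq]
  have : 0 < ‖x‖ := norm_pos_iff.mpr hx
  positivity

lemma fpt_lt (A B : Pt) (hAB : A ≠ B) {a b s t s' t' : ℝ} {x y : Pt}
    (hx : x = fpt A B s t) (hy : y = fpt A B s' t') (h : a * s + b * t < a * s' + b * t') :
    ⟪x, a • (B - A) + b • rot (B - A)⟫ < ⟪y, a • (B - A) + b • rot (B - A)⟫ := by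
  rw [hx, hy, fpt_val, fpt_val]
  have hU : 0 < ⟪B - A, B - A⟫ := inner_self_pos' _ (sub_ne_zero.mpr (Ne.symm hAB))
  linarith [mul_lt_mul_of_pos_right h hU]

lemma seg_bound (v P Q e : Pt) (hP : ⟪P, v⟫ < ⟪e, v⟫) (hQ : ⟪Q, v⟫ < ⟪e, v⟫) :
    ∀ x ∈ segment ℝ P Q, ⟪x, v⟫ < ⟪e, v⟫ := by
  intro x hx
  have hlin : IsLinearMap ℝ (fun x : Pt => ⟪x, v⟫) :=
    ⟨fun a b => inner_add_left a b v, fun c a => real_inner_smul_left a v c⟩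
  exact (convex_halfSpace_lt hlin _).segment_subset hP hQ hx

lemma part1 (A B : Pt) (hAB : A ≠ B) :
    ¬ ∃ (c : Pt) (r : ℝ), 0 ≤ r ∧ segment ℝ A B = Metric.closedBall c r := by
  rintro ⟨c, r, hr, hseg⟩
  have hu : B - A ≠ 0 := sub_ne_zero.mpr (Ne.symm hAB)
  have hU : 0 < ⟪B - A, B - A⟫ := inner_self_pos' _ hu
  have hnu : (0:ℝ) < ‖B - A‖ := norm_pos_iff.mpr hu
  -- c is in the segment
  have hcmem : c ∈ segment ℝ A B := by rw [hseg]; exact Metric.mem_closedBall_self hr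
  rw [segment_eq_image'] at hcmem
  obtain ⟨t0, -, hc⟩ := hcmem
  -- the point p at distance r from c in the orthogonal direction
  have hpmem : c + (r / ‖B - A‖) • rot (B - A) ∈ Metric.closedBall c r := by
    rw [Metric.mem_closedBall, dist_eq_norm, add_sub_cancel_left, norm_smul, norm_rot]
    rw [Real.norm_eq_abs, abs_div, abs_of_nonneg hr, abs_of_pos hnu]
    rw [div_mul_cancel₀ _ hnu.ne']
  have hpseg : c + (r / ‖B - A‖) • rot (B - A) ∈ segment ℝ A B := by rw [hseg]; exact hpmem
  rw [segment_eq_image'] at hpseg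
  obtain ⟨t1, -, hp⟩ := hpseg
  have hdiff : (r / ‖B - A‖) • rot (B - A) = (t1 - t0) • (B - A) := by
    have h1 : c + (r / ‖B - A‖) • rot (B - A) - c = (t1 - t0) • (B - A) := by
      rw [← hp, ← hc]; module
    rw [add_sub_cancel_left] at h1
    exact h1
  have h2 := congrArg (fun z => ⟪rot (B - A), z⟫) hdiff
  simp only [real_inner_smul_right, inner_rot_rot, inner_rot_left, mul_zero] at h2
  have hr0 : r = 0 := by
    have : r / ‖B - A‖ = 0 := by
      by_contra h
      exact h (by nlinarith : r / ‖B - A‖ = 0)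
    field_simp at this
    simpa using this
  rw [hr0, Metric.closedBall_zero] at hseg
  have hA : A = c := by
    have := left_mem_segment ℝ A B; rw [hseg] at this; exact this
  have hB : B = c := by
    have := right_mem_segment ℝ A B; rw [hseg] at this; exact this
  exact hAB (hA.trans hB.symm)

/-- A nondegenerate closed segment is not a disk; moreover there are an isometric
copy of it and a triangle containing both copies witnessing the failure of the
combinatorial property of Theorem 1 (iii). -/
theorem stmt4 (A B : Pt) (hAB : A ≠ B) :
    (¬ ∃ (c : Pt) (r : ℝ), 0 ≤ r ∧ segment ℝ A B = Metric.closedBall c r) ∧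
    ∃ (K : Fin 2 → Set Pt) (φ : Pt ≃ᵢ Pt) (Av : Fin 3 → Pt),
      K 0 = segment ℝ A B ∧ K 1 = φ '' segment ℝ A B ∧
      (∀ k : Fin 2, K k ⊆ convexHull ℝ {Av 0, Av 1, Av 2}) ∧
      ∀ (j : Fin 3) (k : Fin 2),
        ¬ (K (1 - k) ⊆ convexHull ℝ (K k ∪ (({Av 0, Av 1, Av 2} : Set Pt) \ {Av j}))) := by
  refine ⟨part1 A B hAB, ?_⟩
  have hA0 : A = fpt A B 0 0 := by simp [fpt]
  have hB0 : B = fpt A B 1 0 := by simp only [fpt]; module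
  set w0 : Pt := fpt A B 0 (1/2) - ((3/5 : ℝ) • A - (4/5 : ℝ) • rot A) with hw0
  have hφA : myIso w0 A = fpt A B 0 (1/2) := by rw [myIso_apply, hw0]; module
  have hφB : myIso w0 B = fpt A B (3/5) (-(3/10)) := by
    rw [myIso_apply, hw0]; simp only [fpt, rot_sub]; module
  refine ⟨![segment ℝ A B, segment ℝ (fpt A B 0 (1/2)) (fpt A B (3/5) (-(3/10)))],
    myIso w0,
    ![fpt A B (-3) 0, fpt A B 1 (-1), fpt A B 1 1], rfl, ?_, ?_, ?_⟩
  · show segment ℝ (fpt A B 0 (1/2)) (fpt A B (3/5) (-(3/10))) = _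
    rw [myIso_image_segment, hφA, hφB]
  · -- both segments lie in the triangle
    intro k
    have m1 := combo_mem (fpt A B (-3) 0) (fpt A B 1 (-1)) (fpt A B 1 1)
      (1/4) (3/8) (3/8) (by norm_num) (by norm_num) (by norm_num) (by norm_num)
    rw [show (1/4:ℝ) • fpt A B (-3) 0 + (3/8:ℝ) • fpt A B 1 (-1) + (3/8:ℝ) • fpt A B 1 1
        = A from by simp only [fpt]; module] at m1
    have m2 := combo_mem (fpt A B (-3) 0) (fpt A B 1 (-1)) (fpt A B 1 1)
      0 (1/2) (1/2) (by norm_num) (by norm_num) (by norm_num) (by norm_num)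
    rw [show (0:ℝ) • fpt A B (-3) 0 + (1/2:ℝ) • fpt A B 1 (-1) + (1/2:ℝ) • fpt A B 1 1
        = B from by simp only [fpt]; module] at m2
    have m3 := combo_mem (fpt A B (-3) 0) (fpt A B 1 (-1)) (fpt A B 1 1)
      (1/4) (1/8) (5/8) (by norm_num) (by norm_num) (by norm_num) (by norm_num)
    rw [show (1/4:ℝ) • fpt A B (-3) 0 + (1/8:ℝ) • fpt A B 1 (-1) + (5/8:ℝ) • fpt A B 1 1
        = fpt A B 0 (1/2) from by simp only [fpt]; module] at m3
    have m4 := combo_mem (fpt A B (-3) 0) (fpt A B 1 (-1)) (fpt A B 1 1)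
      (1/10) (3/5) (3/10) (by norm_num) (by norm_num) (by norm_num) (by norm_num)
    rw [show (1/10:ℝ) • fpt A B (-3) 0 + (3/5:ℝ) • fpt A B 1 (-1) + (3/10:ℝ) • fpt A B 1 1
        = fpt A B (3/5) (-(3/10)) from by simp only [fpt]; module] at m4
    fin_cases k
    · show segment ℝ A B ⊆ _
      simp only [Matrix.cons_val_zero, Matrix.cons_val_one, Matrix.head_cons,
        Matrix.cons_val_two, Matrix.tail_cons]
      exact (convex_convexHull ℝ _).segment_subset m1 m2
    · show segment ℝ (fpt A B 0 (1/2)) (fpt A B (3/5) (-(3/10))) ⊆ _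
      simp only [Matrix.cons_val_zero, Matrix.cons_val_one, Matrix.head_cons,
        Matrix.cons_val_two, Matrix.tail_cons]
      exact (convex_convexHull ℝ _).segment_subset m3 m4
  · intro j k
    fin_cases j <;> fin_cases k <;>
      simp only [Matrix.cons_val_zero, Matrix.cons_val_one, Matrix.head_cons,
        Matrix.cons_val_two, Matrix.tail_cons] <;>
      intro hsub
    · -- j = 0, k = 0 : e = Q0, v = (-1, 1)
      refine not_mem_hull_of_sep ((-1:ℝ) • (B - A) + (1:ℝ) • rot (B - A)) (fpt A B 0 (1/2)) _ ?_
        (hsub (left_mem_segment ℝ _ _))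
      rintro x (hx | ⟨hx3, hne⟩)
      · exact seg_bound _ A B _ (fpt_lt A B hAB hA0 rfl (by norm_num))
          (fpt_lt A B hAB hB0 rfl (by norm_num)) x hx
      · simp only [Set.mem_insert_iff, Set.mem_singleton_iff] at hx3
        rcases hx3 with rfl | rfl | rfl
        · exact absurd rfl hne
        · exact fpt_lt A B hAB rfl rfl (by norm_num)
        · exact fpt_lt A B hAB rfl rfl (by norm_num)
    · -- j = 0, k = 1 : e = A, v = (-2, -1)
      refine not_mem_hull_of_sep ((-2:ℝ) • (B - A) + (-1:ℝ) • rot (B - A)) A _ ?_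
        (hsub (left_mem_segment ℝ _ _))
      rintro x (hx | ⟨hx3, hne⟩)
      · exact seg_bound _ _ _ _ (fpt_lt A B hAB rfl hA0 (by norm_num))
          (fpt_lt A B hAB rfl hA0 (by norm_num)) x hx
      · simp only [Set.mem_insert_iff, Set.mem_singleton_iff] at hx3
        rcases hx3 with rfl | rfl | rfl
        · exact absurd rfl hne
        · exact fpt_lt A B hAB rfl hA0 (by norm_num)
        · exact fpt_lt A B hAB rfl hA0 (by norm_num)
    · -- j = 1, k = 0 : e = Q1, v = (0, -1)
      refine not_mem_hull_of_sep ((0:ℝ) • (B - A) + (-1:ℝ) • rot (B - A)) (fpt A B (3/5) (-(3/10))) _ ?_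
        (hsub (right_mem_segment ℝ _ _))
      rintro x (hx | ⟨hx3, hne⟩)
      · exact seg_bound _ A B _ (fpt_lt A B hAB hA0 rfl (by norm_num))
          (fpt_lt A B hAB hB0 rfl (by norm_num)) x hx
      · simp only [Set.mem_insert_iff, Set.mem_singleton_iff] at hx3
        rcases hx3 with rfl | rfl | rfl
        · exact fpt_lt A B hAB rfl rfl (by norm_num)
        · exact absurd rfl hne
        · exact fpt_lt A B hAB rfl rfl (by norm_num)
    · -- j = 1, k = 1 : e = B, v = (1, -1)
      refine not_mem_hull_of_sep ((1:ℝ) • (B - A) + (-1:ℝ) • rot (B - A)) B _ ?_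
        (hsub (right_mem_segment ℝ _ _))
      rintro x (hx | ⟨hx3, hne⟩)
      · exact seg_bound _ _ _ _ (fpt_lt A B hAB rfl hB0 (by norm_num))
          (fpt_lt A B hAB rfl hB0 (by norm_num)) x hx
      · simp only [Set.mem_insert_iff, Set.mem_singleton_iff] at hx3
        rcases hx3 with rfl | rfl | rfl
        · exact fpt_lt A B hAB rfl hB0 (by norm_num)
        · exact absurd rfl hne
        · exact fpt_lt A B hAB rfl hB0 (by norm_num)
    · -- j = 2, k = 0 : e = Q0, v = (0, 1)
      refine not_mem_hull_of_sep ((0:ℝ) • (B - A) + (1:ℝ) • rot (B - A)) (fpt A B 0 (1/2)) _ ?_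
        (hsub (left_mem_segment ℝ _ _))
      rintro x (hx | ⟨hx3, hne⟩)
      · exact seg_bound _ A B _ (fpt_lt A B hAB hA0 rfl (by norm_num))
          (fpt_lt A B hAB hB0 rfl (by norm_num)) x hx
      · simp only [Set.mem_insert_iff, Set.mem_singleton_iff] at hx3
        rcases hx3 with rfl | rfl | rfl
        · exact fpt_lt A B hAB rfl rfl (by norm_num)
        · exact fpt_lt A B hAB rfl rfl (by norm_num)
        · exact absurd rfl hne
    · -- j = 2, k = 1 : e = B, v = (1, 1)
      refine not_mem_hull_of_sep ((1:ℝ) • (B - A) + (1:ℝ) • rot (B - A)) B _ ?_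
        (hsub (right_mem_segment ℝ _ _))
      rintro x (hx | ⟨hx3, hne⟩)
      · exact seg_bound _ _ _ _ (fpt_lt A B hAB rfl hB0 (by norm_num))
          (fpt_lt A B hAB rfl hB0 (by norm_num)) x hx
      · simp only [Set.mem_insert_iff, Set.mem_singleton_iff] at hx3
        rcases hx3 with rfl | rfl | rfl
        · exact fpt_lt A B hAB rfl hB0 (by norm_num)
        · exact fpt_lt A B hAB rfl hB0 (by norm_num)
        · exact absurd rfl hne
end
end

section
/- Let D₀ and D₁ be two closed disks of equal radius r > 0 in ℝ². If ℓ₁ and ℓ₂ are two distinct common supporting lines of D₀ and D₁ (each directed so that both disks lie in the closed left halfplane), then it cannot happen that for both i ∈ {1,2}, the first point of (D₀ ∪ D₁) ∩ ℓ_i along the direction of ℓ_i lies in D₀ \ D₁ while the last such point lies in D₁ \ D₀. -/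
open RealInnerProductSpace

noncomputable section

/-- F is the first point of S along the directed line through p with direction v. -/
def IsFirstOn (p v : Pt) (S : Set Pt) (F : Pt) : Prop :=
  F ∈ S ∧ ∃ s : ℝ, F = p + s • v ∧
    ∀ (x : Pt) (t : ℝ), x ∈ S → x = p + t • v → s ≤ t

/-- L is the last point of S along the directed line through p with direction v. -/
def IsLastOn (p v : Pt) (S : Set Pt) (L : Pt) : Prop :=
  L ∈ S ∧ ∃ s : ℝ, L = p + s • v ∧
    ∀ (x : Pt) (t : ℝ), x ∈ S → x = p + t • v → t ≤ s

lemma inner_rot_self (v : Pt) : ⟪v, rot v⟫ = 0 := by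
  simp [rot, PiLp.inner_apply, Fin.sum_univ_two]
  ring

lemma rot_ne_zero {v : Pt} (hv : v ≠ 0) : rot v ≠ 0 := by
  intro h
  apply hv
  ext i
  have h0 := congrArg (fun w : Pt => w 0) h
  have h1 := congrArg (fun w : Pt => w 1) h
  simp [rot] at h0 h1
  fin_cases i <;> simp [h0, h1]

lemma rot_smul_s12 (c : ℝ) (v : Pt) : rot (c • v) = c • rot v := by
  ext i
  fin_cases i <;> simp [rot] <;> ring

lemma tangent_unique (r : ℝ) (hr : 0 < r) (c p v : Pt) (hv : v ≠ 0)
    (hs : ∀ x ∈ Metric.closedBall c r, 0 ≤ ⟪x - p, rot v⟫)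
    (x : Pt) (hx : x ∈ dline p v) (hxB : x ∈ Metric.closedBall c r) :
    x = c - (r / ‖rot v‖) • rot v := by
  set n := rot v with hn
  have hn0 : n ≠ 0 := rot_ne_zero hv
  have hnpos : 0 < ‖n‖ := norm_pos_iff.mpr hn0
  -- the candidate tangent point is in the ball
  have hyB : c - (r / ‖n‖) • n ∈ Metric.closedBall c r := by
    simp only [Metric.mem_closedBall, dist_eq_norm]
    have : ‖c - (r / ‖n‖) • n - c‖ = ‖(r / ‖n‖) • n‖ := by
      rw [sub_sub_cancel_left, norm_neg]
    rw [this, norm_smul, Real.norm_eq_abs, abs_of_pos (by positivity)]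
    rw [div_mul_cancel₀ _ (ne_of_gt hnpos)]
  have h1 : r * ‖n‖ ≤ ⟪c - p, n⟫ := by
    have := hs _ hyB
    rw [show c - (r / ‖n‖) • n - p = (c - p) - (r / ‖n‖) • n by abel] at this
    rw [inner_sub_left, real_inner_smul_left, real_inner_self_eq_norm_sq] at this
    have e : r / ‖n‖ * ‖n‖ ^ 2 = r * ‖n‖ := by field_simp
    linarith [this, e ▸ this]
  obtain ⟨t, rfl⟩ := hx
  have hxp : ⟪p + t • v - p, n⟫ = 0 := by
    rw [add_sub_cancel_left, real_inner_smul_left, inner_rot_self]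
    ring
  have h2 : r * ‖n‖ ≤ ⟪c - (p + t • v), n⟫ := by
    have : ⟪c - (p + t • v), n⟫ = ⟪c - p, n⟫ - ⟪p + t • v - p, n⟫ := by
      rw [← inner_sub_left]; congr 1; abel
    rw [this, hxp]; linarith
  have hcs : ⟪c - (p + t • v), n⟫ ≤ ‖c - (p + t • v)‖ * ‖n‖ :=
    real_inner_le_norm _ _
  have hdist : ‖c - (p + t • v)‖ ≤ r := by
    have := Metric.mem_closedBall.mp hxB
    rw [dist_eq_norm] at this
    rw [← norm_neg]; simpa [neg_sub] using this
  have hnr : ‖c - (p + t • v)‖ = r := by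
    by_contra hne
    have hlt : ‖c - (p + t • v)‖ < r := lt_of_le_of_ne hdist hne
    nlinarith
  have heq : ⟪c - (p + t • v), n⟫ = ‖c - (p + t • v)‖ * ‖n‖ := by
    rw [hnr]; nlinarith
  have := (inner_eq_norm_mul_iff_real).mp heq
  rw [hnr] at this
  have : c - (p + t • v) = (r / ‖n‖) • n := by
    have h := congrArg (fun w => (‖n‖)⁻¹ • w) this
    simp only [smul_smul] at h
    rw [inv_mul_cancel₀ (ne_of_gt hnpos), one_smul] at h
    rw [h]; congr 1; field_simp
  have := sub_eq_iff_eq_add.mp this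
  rw [eq_comm, sub_eq_iff_eq_add]
  rw [this]; abel

lemma dline_shift (p v q : Pt) (hq : q ∈ dline p v) : dline p v = dline q v := by
  obtain ⟨t0, rfl⟩ := hq
  ext x
  constructor
  · rintro ⟨t, rfl⟩; exact ⟨t - t0, by module⟩
  · rintro ⟨t, rfl⟩; exact ⟨t0 + t, by module⟩

lemma dline_smul (q v : Pt) (c : ℝ) (hc : c ≠ 0) : dline q (c • v) = dline q v := by
  ext x
  constructor
  · rintro ⟨t, rfl⟩; exact ⟨t * c, by module⟩
  · rintro ⟨t, rfl⟩
    refine ⟨t / c, ?_⟩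
    rw [smul_smul, div_mul_cancel₀ _ hc]

/-- Two closed disks of the same radius cannot cross each other: for two distinct
common supporting lines (both disks on the closed left side of each), it cannot
happen that on both lines the first point of the union lies only in the first
disk while the last point lies only in the second disk. -/
theorem stmt12 (r : ℝ) (hr : 0 < r) (c₀ c₁ : Pt) (D₀ D₁ : Set Pt)
    (hD₀ : D₀ = Metric.closedBall c₀ r) (hD₁ : D₁ = Metric.closedBall c₁ r)
    (p₁ v₁ p₂ v₂ : Pt) (hv₁ : v₁ ≠ 0) (hv₂ : v₂ ≠ 0)
    (hdistinct : dline p₁ v₁ ≠ dline p₂ v₂)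
    (hm₁ : (dline p₁ v₁ ∩ D₀).Nonempty ∧ (dline p₁ v₁ ∩ D₁).Nonempty)
    (hs₁ : ∀ x ∈ D₀ ∪ D₁, 0 ≤ ⟪x - p₁, rot v₁⟫)
    (hm₂ : (dline p₂ v₂ ∩ D₀).Nonempty ∧ (dline p₂ v₂ ∩ D₁).Nonempty)
    (hs₂ : ∀ x ∈ D₀ ∪ D₁, 0 ≤ ⟪x - p₂, rot v₂⟫) :
    ¬ ∃ F₁ L₁ F₂ L₂ : Pt,
        IsFirstOn p₁ v₁ ((D₀ ∪ D₁) ∩ dline p₁ v₁) F₁ ∧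
        IsLastOn p₁ v₁ ((D₀ ∪ D₁) ∩ dline p₁ v₁) L₁ ∧
        F₁ ∈ D₀ \ D₁ ∧ L₁ ∈ D₁ \ D₀ ∧
        IsFirstOn p₂ v₂ ((D₀ ∪ D₁) ∩ dline p₂ v₂) F₂ ∧
        IsLastOn p₂ v₂ ((D₀ ∪ D₁) ∩ dline p₂ v₂) L₂ ∧
        F₂ ∈ D₀ \ D₁ ∧ L₂ ∈ D₁ \ D₀ := by
  rintro ⟨F₁, L₁, F₂, L₂, ⟨⟨hF₁S, hF₁l⟩, sF₁, hsF₁, hfirst₁⟩,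
    ⟨⟨hL₁S, hL₁l⟩, sL₁, hsL₁, hlast₁⟩, ⟨hF₁0, hF₁n1⟩, ⟨hL₁1, hL₁n0⟩,
    ⟨⟨hF₂S, hF₂l⟩, sF₂, hsF₂, hfirst₂⟩,
    ⟨⟨hL₂S, hL₂l⟩, sL₂, hsL₂, hlast₂⟩, ⟨hF₂0, hF₂n1⟩, ⟨hL₂1, hL₂n0⟩⟩
  subst hD₀ hD₁
  -- tangency identities on line 1
  have hs₁0 : ∀ x ∈ Metric.closedBall c₀ r, 0 ≤ ⟪x - p₁, rot v₁⟫ :=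
    fun x hx => hs₁ x (Or.inl hx)
  have hs₁1 : ∀ x ∈ Metric.closedBall c₁ r, 0 ≤ ⟪x - p₁, rot v₁⟫ :=
    fun x hx => hs₁ x (Or.inr hx)
  have hs₂0 : ∀ x ∈ Metric.closedBall c₀ r, 0 ≤ ⟪x - p₂, rot v₂⟫ :=
    fun x hx => hs₂ x (Or.inl hx)
  have hs₂1 : ∀ x ∈ Metric.closedBall c₁ r, 0 ≤ ⟪x - p₂, rot v₂⟫ :=
    fun x hx => hs₂ x (Or.inr hx)
  have hF₁e : F₁ = c₀ - (r / ‖rot v₁‖) • rot v₁ :=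
    tangent_unique r hr c₀ p₁ v₁ hv₁ hs₁0 F₁ hF₁l hF₁0
  have hL₁e : L₁ = c₁ - (r / ‖rot v₁‖) • rot v₁ :=
    tangent_unique r hr c₁ p₁ v₁ hv₁ hs₁1 L₁ hL₁l hL₁1
  have hF₂e : F₂ = c₀ - (r / ‖rot v₂‖) • rot v₂ :=
    tangent_unique r hr c₀ p₂ v₂ hv₂ hs₂0 F₂ hF₂l hF₂0
  have hL₂e : L₂ = c₁ - (r / ‖rot v₂‖) • rot v₂ :=
    tangent_unique r hr c₁ p₂ v₂ hv₂ hs₂1 L₂ hL₂l hL₂1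
  -- c₁ - c₀ is a positive multiple of v₁
  have hFL₁ : F₁ ≠ L₁ := fun h => hF₁n1 (h ▸ hL₁1)
  have hle₁ : sF₁ ≤ sL₁ := hfirst₁ L₁ sL₁ ⟨hL₁S, hL₁l⟩ hsL₁
  have hdiff₁ : c₁ - c₀ = (sL₁ - sF₁) • v₁ := by
    have : L₁ - F₁ = (sL₁ - sF₁) • v₁ := by rw [hsL₁, hsF₁]; module
    rw [hF₁e, hL₁e] at this
    rw [← this]; abel
  have hpos₁ : 0 < sL₁ - sF₁ := by
    rcases lt_or_eq_of_le hle₁ with h | h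
    · linarith
    · exfalso; apply hFL₁; rw [hsF₁, hsL₁, h]
  have hFL₂ : F₂ ≠ L₂ := fun h => hF₂n1 (h ▸ hL₂1)
  have hle₂ : sF₂ ≤ sL₂ := hfirst₂ L₂ sL₂ ⟨hL₂S, hL₂l⟩ hsL₂
  have hdiff₂ : c₁ - c₀ = (sL₂ - sF₂) • v₂ := by
    have : L₂ - F₂ = (sL₂ - sF₂) • v₂ := by rw [hsL₂, hsF₂]; module
    rw [hF₂e, hL₂e] at this
    rw [← this]; abel
  have hpos₂ : 0 < sL₂ - sF₂ := by
    rcases lt_or_eq_of_le hle₂ with h | h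
    · linarith
    · exfalso; apply hFL₂; rw [hsF₂, hsL₂, h]
  -- v₂ = k • v₁ with k > 0
  set a₁ := sL₁ - sF₁
  set a₂ := sL₂ - sF₂
  have hv2v1 : v₂ = (a₁ / a₂) • v₁ := by
    have h : a₂ • v₂ = a₁ • v₁ := by rw [← hdiff₁, ← hdiff₂]
    have := congrArg (fun w => (a₂)⁻¹ • w) h
    simp only [smul_smul, inv_mul_cancel₀ (ne_of_gt hpos₂), one_smul] at this
    rw [this, div_eq_inv_mul]
  have hk : 0 < a₁ / a₂ := div_pos hpos₁ hpos₂
  -- tangent points of D₀ coincide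
  have hne : F₂ = F₁ := by
    rw [hF₁e, hF₂e, hv2v1, rot_smul_s12]
    congr 1
    rw [smul_smul, norm_smul, Real.norm_eq_abs, abs_of_pos hk]
    congr 1
    have hn₁ : ‖rot v₁‖ ≠ 0 := norm_ne_zero_iff.mpr (rot_ne_zero hv₁)
    field_simp
  -- both lines are the line through F₁ with direction v₁
  apply hdistinct
  have e₁ : dline p₁ v₁ = dline F₁ v₁ := dline_shift _ _ _ hF₁l
  have e₂ : dline p₂ v₂ = dline F₂ v₂ := dline_shift _ _ _ hF₂l
  rw [e₁, e₂, hne, hv2v1, dline_smul _ _ _ (ne_of_gt hk)]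
end
end
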